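/- Lemma (risk surrogate bound): let K ≥ 2, let D = ((x_1,y_1),...,(x_N,y_N)) be a finite dataset with labels y_i ∈ {1,...,K}, let f : X × {1,...,K} → ℝ be any function, and let γ = (γ_1,...,γ_K) with all γ_k > 0. Define the empirical γ-margin risk R̂_D^γ(f) = (1/N) Σ_{i=1}^N Φ_{γ_{y_i}}(f(x_i,y_i) − max_{y'≠y_i} f(x_i,y')) and the empirical γ-margin cross-entropy risk R̂_D^{γ,ce}(f) = (1/N) Σ_{i=1}^N ln(1 + Σ_{y'≠y_i} exp((f(x_i,y') − f(x_i,y_i))/γ_{y_i})). Then R̂_D^γ(f) ≤ (1/ln 2) · R̂_D^{γ,ce}(f). -/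

import Mathlib

/-- The ramp function `Φ_γ(u) = min(1, max(0, 1 − u/γ))`. -/
noncomputable def ramp (γ u : ℝ) : ℝ := min 1 (max 0 (1 - u / γ))

theorem eraseUnivNonempty {K : ℕ} (hK : 2 ≤ K) (y : Fin K) :
    (Finset.univ.erase y).Nonempty := by
  rw [← Finset.card_pos, Finset.card_erase_of_mem (Finset.mem_univ y),
    Finset.card_univ, Fintype.card_fin]
  omega

/-- `max_{y' ≠ y} z_{y'}`, the largest score among the classes other than `y`. -/
noncomputable def maxOther {K : ℕ} (hK : 2 ≤ K) (z : Fin K → ℝ) (y : Fin K) : ℝ :=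
  (Finset.univ.erase y).sup' (eraseUnivNonempty hK y) z

lemma key_ramp (t : ℝ) :
    min 1 (max 0 (1 - t)) * Real.log 2 ≤ Real.log (1 + Real.exp (-t)) := by
  have h2 : (0:ℝ) < Real.log 2 := Real.log_pos (by norm_num)
  rcases le_or_gt t 0 with ht | ht
  · have hle : Real.log 2 ≤ Real.log (1 + Real.exp (-t)) := by
      have h1 : (1:ℝ) ≤ Real.exp (-t) := Real.one_le_exp (by linarith)
      exact Real.log_le_log (by norm_num) (by linarith)
    calc min 1 (max 0 (1 - t)) * Real.log 2 ≤ 1 * Real.log 2 :=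
          mul_le_mul_of_nonneg_right (min_le_left _ _) h2.le
      _ = Real.log 2 := one_mul _
      _ ≤ _ := hle
  · rcases le_or_gt 1 t with ht1 | ht1
    · have hm : min 1 (max 0 (1 - t)) = 0 := by
        rw [max_eq_left (by linarith)]
        simp
      rw [hm, zero_mul]
      exact Real.log_nonneg (by nlinarith [Real.exp_pos (-t)])
    · have hm : min 1 (max 0 (1 - t)) = 1 - t := by
        rw [max_eq_right (by linarith), min_eq_right (by linarith)]
      rw [hm]
      have hlog2 : (1:ℝ)/2 ≤ Real.log 2 := by
        have := Real.log_two_gt_d9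
        linarith
      have he : Real.exp (-t/2) * Real.exp (-t/2) = Real.exp (-t) := by
        rw [← Real.exp_add]; ring_nf
      have hamgm : 2 * Real.exp (-t/2) ≤ 1 + Real.exp (-t) := by
        nlinarith [sq_nonneg (1 - Real.exp (-t/2)), Real.exp_pos (-t/2)]
      have h1 : Real.log (2 * Real.exp (-t/2)) ≤ Real.log (1 + Real.exp (-t)) :=
        Real.log_le_log (by positivity) hamgm
      rw [Real.log_mul (by norm_num) (Real.exp_ne_zero _), Real.log_exp] at h1
      nlinarith [mul_le_mul_of_nonneg_left hlog2 ht.le]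

/-- **Risk surrogate bound.** For `K ≥ 2`, a finite dataset `((x_i, y_i))_{i=1}^N`,
any function `f : X × {1,…,K} → ℝ` and per-class margins `γ_k > 0`, the empirical
`γ`-margin risk is bounded by `(1/ln 2)` times the empirical `γ`-margin
cross-entropy risk:
`R̂_D^γ(f) ≤ (1/ln 2) · R̂_D^{γ,ce}(f)`. -/
theorem empirical_margin_risk_le_inv_log_two_mul_ce_risk
    {X : Type*} (K N : ℕ) (hK : 2 ≤ K) (hN : 0 < N)
    (x : Fin N → X) (ylab : Fin N → Fin K)
    (f : X → Fin K → ℝ) (γ : Fin K → ℝ) (hγ : ∀ k, 0 < γ k) :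
    (1 / (N : ℝ)) *
        ∑ i, ramp (γ (ylab i)) (f (x i) (ylab i) - maxOther hK (f (x i)) (ylab i)) ≤
      (1 / Real.log 2) *
        ((1 / (N : ℝ)) *
          ∑ i, Real.log (1 + ∑ y' ∈ Finset.univ.erase (ylab i),
            Real.exp ((f (x i) y' - f (x i) (ylab i)) / γ (ylab i)))) := by
  have h2 : (0:ℝ) < Real.log 2 := Real.log_pos (by norm_num)
  -- pointwise inequality
  have hpt : ∀ i : Fin N,
      ramp (γ (ylab i)) (f (x i) (ylab i) - maxOther hK (f (x i)) (ylab i)) * Real.log 2 ≤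
      Real.log (1 + ∑ y' ∈ Finset.univ.erase (ylab i),
        Real.exp ((f (x i) y' - f (x i) (ylab i)) / γ (ylab i))) := by
    intro i
    set y := ylab i
    set g := γ y with hg
    have hgpos : 0 < g := hγ y
    set t : ℝ := (f (x i) y - maxOther hK (f (x i)) y) / g with hts
    have hramp : ramp g (f (x i) y - maxOther hK (f (x i)) y) = min 1 (max 0 (1 - t)) := rfl
    -- exp(-t) ≤ sum
    obtain ⟨y₀, hy₀mem, hy₀⟩ := Finset.exists_mem_eq_sup' (eraseUnivNonempty hK y) (f (x i))
    have hS : Real.exp (-t) ≤ ∑ y' ∈ Finset.univ.erase y,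
        Real.exp ((f (x i) y' - f (x i) y) / g) := by
      have heq : Real.exp (-t) = Real.exp ((f (x i) y₀ - f (x i) y) / g) := by
        congr 1
        rw [hts]
        rw [show maxOther hK (f (x i)) y = f (x i) y₀ from hy₀]
        field_simp
        ring
      rw [heq]
      exact Finset.single_le_sum (f := fun y' => Real.exp ((f (x i) y' - f (x i) y) / g))
        (fun j _ => (Real.exp_pos _).le) hy₀mem
    calc ramp g (f (x i) y - maxOther hK (f (x i)) y) * Real.log 2
        = min 1 (max 0 (1 - t)) * Real.log 2 := by rw [hramp]
      _ ≤ Real.log (1 + Real.exp (-t)) := key_ramp t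
      _ ≤ _ := Real.log_le_log (by positivity) (by linarith)
  -- sum it up
  have hsum : (∑ i, ramp (γ (ylab i)) (f (x i) (ylab i) - maxOther hK (f (x i)) (ylab i)))
        * Real.log 2 ≤
      ∑ i, Real.log (1 + ∑ y' ∈ Finset.univ.erase (ylab i),
        Real.exp ((f (x i) y' - f (x i) (ylab i)) / γ (ylab i))) := by
    rw [Finset.sum_mul]
    exact Finset.sum_le_sum fun i _ => hpt i
  have hNpos : (0:ℝ) < (N:ℝ) := by exact_mod_cast hN
  rw [one_div (Real.log 2), inv_mul_eq_div, le_div_iff₀ h2]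
  nlinarith [mul_le_mul_of_nonneg_left hsum (by positivity : (0:ℝ) ≤ 1 / (N:ℝ))]
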